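/- With stopping time τ as above, J(a(π)) − J(π) = E[(r⊥ − V(x,y_{1:τ-1};π))·𝟙{τ ≤ c}]: the improvement of dynamic abstention over the base policy equals the expected gap between the fallback reward and the value at abstention time, on the event of abstention. -/

import Mathlib

open Finset

attribute [local instance] Classical.propDecidable

variable {V : Type*}

/-- Expected terminal reward (value function) of policy `π` from state `s`
with `n` generation steps remaining; `e` is the end-of-sequence token and
`r` the terminal reward, collected only when `e` is emitted.  States already
containing `e` are terminal and have value `0`. -/
noncomputable def Vval [Fintype V] (e : V) (r : List V → ℝ)
    (π : List V → V → ℝ) : ℕ → List V → ℝ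
  | 0, _ => 0
  | n+1, s =>
      if e ∈ s then 0 else
      ∑ a : V, π s a * (if a = e then r (s ++ [a]) else Vval e r π n (s ++ [a]))

/-- Value of the dynamic value-thresholding policy `a(π)`: at any
non-terminal state whose value under `π` is below the abstention reward
`rb` it abstains and receives `rb`; otherwise it follows `π`. -/
noncomputable def Aval [Fintype V] (e : V) (r : List V → ℝ)
    (π : List V → V → ℝ) (rb : ℝ) : ℕ → List V → ℝ
  | 0, _ => 0
  | n+1, s =>
      if e ∈ s then 0 else
      if Vval e r π (n+1) s < rb then rb else
      ∑ a : V, π s a * (if a = e then r (s ++ [a]) else Aval e r π rb n (s ++ [a]))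

/-- One generation step with positive probability from a non-terminal state. -/
def Step (e : V) (π : List V → V → ℝ) (s s' : List V) : Prop :=
  e ∉ s ∧ ∃ a : V, 0 < π s a ∧ s' = s ++ [a]

/-- `s'` is reachable from `s` with positive probability under `π`. -/
def Reach (e : V) (π : List V → V → ℝ) : List V → List V → Prop :=
  Relation.ReflTransGen (Step e π)

/-- Value of the fixed-position abstention policy `f(π;k)`: it applies the
value-thresholding abstention rule only at timestep `k` (i.e. at prefixes of
length `k-1`) and follows `π` otherwise. -/
noncomputable def Fval [Fintype V] (e : V) (r : List V → ℝ)
    (π : List V → V → ℝ) (rb : ℝ) (k : ℕ) : ℕ → List V → ℝ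
  | 0, _ => 0
  | n+1, s =>
      if e ∈ s then 0 else
      if s.length + 1 = k ∧ Vval e r π (n+1) s < rb then rb else
      ∑ a : V, π s a * (if a = e then r (s ++ [a]) else Fval e r π rb k n (s ++ [a]))

/-- Probability that `π`, started from state `s`, generates exactly the
token sequence `p`. -/
noncomputable def prefProbAux (π : List V → V → ℝ) : List V → List V → ℝ
  | _, [] => 1
  | s, a :: p => π s a * prefProbAux π (s ++ [a]) p

/-- First abstention time of the dynamic policy along the trajectory `y`
(with horizon `T`): `τ = min{t ≥ 1 : V(y_{1:t-1};π) < r⊥}`, with the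
sentinel value `T + 2` (playing the role of `∞`) if no such `t` exists. -/
noncomputable def TauOf [Fintype V] (e : V) (r : List V → ℝ)
    (π : List V → V → ℝ) (rb : ℝ) (T : ℕ) (y : List V) : ℕ :=
  if h : ∃ m, m < T ∧ Vval e r π (T - m) (y.take m) < rb then Nat.find h + 1
  else T + 2

/-- Completion (eos) time of the trajectory `y`: the (1-indexed) position of
the first occurrence of `e`, or `T + 1` if `y` contains no `e`. -/
noncomputable def CtOf (e : V) (T : ℕ) (y : List V) : ℕ :=
  if e ∈ y then y.idxOf e + 1 else T + 1


noncomputable def Gval [Fintype V] (e : V) (r : List V → ℝ)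
    (π : List V → V → ℝ) (rb : ℝ) : ℕ → List V → ℝ
  | 0, _ => 0
  | n+1, s =>
      if e ∈ s then 0 else
      if Vval e r π (n+1) s < rb then rb - Vval e r π (n+1) s else
      ∑ a : V, π s a * (if a = e then 0 else Gval e r π rb n (s ++ [a]))

noncomputable def Phi [Fintype V] (e : V) (r : List V → ℝ)
    (π : List V → V → ℝ) (rb : ℝ) (T : ℕ) (y : List V) : ℝ :=
  (rb - Vval e r π (T - (TauOf e r π rb T y - 1))
      (y.take (TauOf e r π rb T y - 1))) *
    (if TauOf e r π rb T y ≤ CtOf e T y then (1:ℝ) else 0)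

lemma ofFn_cons {n : ℕ} (a : V) (w : Fin n → V) :
    List.ofFn (Fin.cons a w) = a :: List.ofFn w := by
  rw [List.ofFn_succ]
  simp [Fin.cons_zero, Fin.cons_succ, Function.comp]

lemma aval_sub_vval [Fintype V] (e : V) (r : List V → ℝ)
    (π : List V → V → ℝ) (rb : ℝ) :
    ∀ (n : ℕ) (s : List V),
      Aval e r π rb n s - Vval e r π n s = Gval e r π rb n s := by
  intro n
  induction n with
  | zero => intro s; simp [Aval, Vval, Gval]
  | succ n ih =>
    intro s
    by_cases hs : e ∈ s
    · simp [Aval, Vval, Gval, hs]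
    · by_cases hlt : Vval e r π (n+1) s < rb
      · have hA : Aval e r π rb (n+1) s = rb := by
          rw [Aval, if_neg hs, if_pos hlt]
        have hG : Gval e r π rb (n+1) s = rb - Vval e r π (n+1) s := by
          rw [Gval, if_neg hs, if_pos hlt]
        rw [hA, hG]
      · have hA : Aval e r π rb (n+1) s
            = ∑ a : V, π s a * (if a = e then r (s ++ [a]) else Aval e r π rb n (s ++ [a])) := by
          rw [Aval, if_neg hs, if_neg hlt]
        have hV : Vval e r π (n+1) s
            = ∑ a : V, π s a * (if a = e then r (s ++ [a]) else Vval e r π n (s ++ [a])) := by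
          rw [Vval, if_neg hs]
        have hG : Gval e r π rb (n+1) s
            = ∑ a : V, π s a * (if a = e then 0 else Gval e r π rb n (s ++ [a])) := by
          rw [Gval, if_neg hs, if_neg hlt]
        rw [hA, hV, hG, ← Finset.sum_sub_distrib]
        refine Finset.sum_congr rfl fun a _ => ?_
        rw [← mul_sub]
        congr 1
        by_cases ha : a = e
        · simp [ha]
        · simp only [if_neg ha]; exact ih (s ++ [a])

lemma sum_prefProb [Fintype V] (e : V) (π : List V → V → ℝ)
    (hπ1 : ∀ s, ∑ a : V, π s a = 1) :
    ∀ (n : ℕ) (s : List V),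
      ∑ w : Fin n → V, prefProbAux π s (List.ofFn w) = 1 := by
  intro n
  induction n with
  | zero => intro s; simp [prefProbAux]
  | succ n ih =>
    intro s
    rw [← Equiv.sum_comp (Fin.consEquiv (fun _ : Fin (n+1) => V))
        (fun w : Fin (n+1) → V => prefProbAux π s (List.ofFn w)), Fintype.sum_prod_type]
    have : ∀ (a : V) (w : Fin n → V),
        prefProbAux π s (List.ofFn ((Fin.consEquiv (fun _ : Fin (n+1) => V)) (a, w)))
          = π s a * prefProbAux π (s ++ [a]) (List.ofFn w) := by
      intro a w
      have : (Fin.consEquiv (fun _ : Fin (n+1) => V)) (a, w) = Fin.cons a w := rfl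
      rw [this, ofFn_cons]
      rfl
    calc ∑ a : V, ∑ w : Fin n → V,
          prefProbAux π s (List.ofFn ((Fin.consEquiv (fun _ : Fin (n+1) => V)) (a, w)))
        = ∑ a : V, ∑ w : Fin n → V, π s a * prefProbAux π (s ++ [a]) (List.ofFn w) := by
          exact Finset.sum_congr rfl fun a _ => Finset.sum_congr rfl fun w _ => this a w
      _ = ∑ a : V, π s a * ∑ w : Fin n → V, prefProbAux π (s ++ [a]) (List.ofFn w) := by
          exact Finset.sum_congr rfl fun a _ => (Finset.mul_sum _ _ _).symm
      _ = ∑ a : V, π s a * 1 := by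
          exact Finset.sum_congr rfl fun a _ => by rw [ih]
      _ = 1 := by simp [hπ1 s]

lemma main_ind [Fintype V] (e : V) (r : List V → ℝ)
    (π : List V → V → ℝ) (rb : ℝ) (T : ℕ)
    (hπ1 : ∀ s, ∑ a : V, π s a = 1) (hrb0 : 0 < rb) :
    ∀ (n : ℕ) (s : List V), s.length + n = T → e ∉ s →
      (∀ m, m < s.length → ¬ (Vval e r π (T - m) (s.take m) < rb)) →
      Gval e r π rb n s =
        ∑ w : Fin n → V, prefProbAux π s (List.ofFn w) *
          Phi e r π rb T (s ++ List.ofFn w) := by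
  intro n
  induction n with
  | zero =>
    intro s hlen hs H
    have hsT : s.length = T := by omega
    have hG : Gval e r π rb 0 s = 0 := rfl
    rw [hG]
    symm
    refine Finset.sum_eq_zero fun w _ => ?_
    have hw : List.ofFn w = [] := List.ofFn_zero
    rw [hw, List.append_nil]
    have hne : ¬ ∃ m, m < T ∧ Vval e r π (T - m) (s.take m) < rb := by
      rintro ⟨m, hmT, hm⟩
      exact H m (by omega) hm
    have htau : TauOf e r π rb T s = T + 2 := by
      unfold TauOf; rw [dif_neg hne]
    have hct : CtOf e T s ≤ T + 1 := by
      unfold CtOf; split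
      · have h2 := List.idxOf_lt_length_iff.mpr (by assumption : e ∈ s)
        omega
      · omega
    simp only [Phi, htau]
    rw [if_neg (by omega)]
    ring
  | succ n ih =>
    intro s hlen hs H
    have hsT : s.length < T := by omega
    have hTs : T - s.length = n + 1 := by omega
    by_cases hlt : Vval e r π (n+1) s < rb
    · have hG : Gval e r π rb (n+1) s = rb - Vval e r π (n+1) s := by
        rw [Gval, if_neg hs, if_pos hlt]
      rw [hG]
      have hPhi : ∀ w : Fin (n+1) → V,
          Phi e r π rb T (s ++ List.ofFn w) = rb - Vval e r π (n+1) s := by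
        intro w
        have htake : (s ++ List.ofFn w).take s.length = s := List.take_left
        have hex : ∃ m, m < T ∧ Vval e r π (T - m) ((s ++ List.ofFn w).take m) < rb :=
          ⟨s.length, hsT, by rw [htake, hTs]; exact hlt⟩
        have hfind : Nat.find hex = s.length := by
          rw [Nat.find_eq_iff]
          refine ⟨⟨hsT, by rw [htake, hTs]; exact hlt⟩, ?_⟩
          intro m hm hc
          obtain ⟨-, hc⟩ := hc
          rw [List.take_append_of_le_length (le_of_lt hm)] at hc
          exact H m hm hc
        have htau : TauOf e r π rb T (s ++ List.ofFn w) = s.length + 1 := by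
          unfold TauOf; rw [dif_pos hex, hfind]
        have hct : s.length + 1 ≤ CtOf e T (s ++ List.ofFn w) := by
          unfold CtOf; split
          · rw [List.idxOf_append_of_notMem hs]; omega
          · omega
        simp only [Phi, htau, Nat.add_sub_cancel]
        rw [htake, hTs, if_pos hct]
        ring
      symm
      calc ∑ w : Fin (n+1) → V,
            prefProbAux π s (List.ofFn w) * Phi e r π rb T (s ++ List.ofFn w)
          = ∑ w : Fin (n+1) → V,
            prefProbAux π s (List.ofFn w) * (rb - Vval e r π (n+1) s) := by
            exact Finset.sum_congr rfl fun w _ => by rw [hPhi]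
        _ = (∑ w : Fin (n+1) → V, prefProbAux π s (List.ofFn w))
              * (rb - Vval e r π (n+1) s) := by rw [Finset.sum_mul]
        _ = rb - Vval e r π (n+1) s := by rw [sum_prefProb e π hπ1, one_mul]
    · have hG : Gval e r π rb (n+1) s
          = ∑ a : V, π s a * (if a = e then 0 else Gval e r π rb n (s ++ [a])) := by
        rw [Gval, if_neg hs, if_neg hlt]
      rw [hG]
      symm
      rw [← Equiv.sum_comp (Fin.consEquiv (fun _ : Fin (n+1) => V))
          (fun w : Fin (n+1) → V =>
            prefProbAux π s (List.ofFn w) * Phi e r π rb T (s ++ List.ofFn w)),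
        Fintype.sum_prod_type]
      refine Finset.sum_congr rfl fun a _ => ?_
      have hcons : ∀ w : Fin n → V,
          (Fin.consEquiv (fun _ : Fin (n+1) => V)) (a, w) = Fin.cons a w := fun _ => rfl
      have hstep : ∀ w : Fin n → V,
          (fun w : Fin (n+1) → V =>
            prefProbAux π s (List.ofFn w) * Phi e r π rb T (s ++ List.ofFn w))
            ((Fin.consEquiv (fun _ : Fin (n+1) => V)) (a, w))
          = prefProbAux π s (a :: List.ofFn w)
              * Phi e r π rb T (s ++ a :: List.ofFn w) := by
        intro w
        simp only [hcons, ofFn_cons]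
      rw [Finset.sum_congr rfl fun w _ => hstep w]
      have hpp : ∀ l : List V,
          prefProbAux π s (a :: l) = π s a * prefProbAux π (s ++ [a]) l := fun _ => rfl
      by_cases ha : a = e
      · subst ha
        rw [if_pos rfl, mul_zero]
        refine Finset.sum_eq_zero fun w _ => ?_
        set l := List.ofFn w with hl
        have hyne : ∀ m, m ≤ s.length →
            ¬ (m < T ∧ Vval a r π (T - m) ((s ++ a :: l).take m) < rb) := by
          intro m hm
          rintro ⟨hmT, hv⟩
          rcases lt_or_eq_of_le hm with hm' | hm'
          · rw [List.take_append_of_le_length (le_of_lt hm')] at hv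
            exact H m hm' hv
          · subst hm'
            rw [List.take_left, hTs] at hv
            exact hlt hv
        have hct : CtOf a T (s ++ a :: l) = s.length + 1 := by
          unfold CtOf
          rw [if_pos (by simp), List.idxOf_append_of_notMem hs,
            List.idxOf_cons_self]
        have htau : s.length + 2 ≤ TauOf a r π rb T (s ++ a :: l) := by
          unfold TauOf
          split
          · rename_i hex
            have hfd : s.length + 1 ≤ Nat.find hex := by
              by_contra hcon
              push_neg at hcon
              exact hyne _ (Nat.lt_succ_iff.mp hcon) (Nat.find_spec hex)
            omega
          · omega
        have hPhi0 : Phi a r π rb T (s ++ a :: l) = 0 := by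
          simp only [Phi]
          rw [hct, if_neg (by omega)]
          ring
        rw [hPhi0, mul_zero]
      · rw [if_neg ha]
        have hs' : e ∉ s ++ [a] := by
          simp only [List.mem_append, List.mem_singleton]
          rintro (h | h)
          · exact hs h
          · exact ha h.symm
        have hlen' : (s ++ [a]).length + n = T := by
          simp only [List.length_append, List.length_singleton]; omega
        have H' : ∀ m, m < (s ++ [a]).length →
            ¬ (Vval e r π (T - m) ((s ++ [a]).take m) < rb) := by
          intro m hm
          simp only [List.length_append, List.length_singleton] at hm
          rcases Nat.lt_succ_iff_lt_or_eq.mp hm with hm' | hm'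
          · rw [List.take_append_of_le_length (le_of_lt hm')]
            exact H m hm'
          · subst hm'
            rw [List.take_left, hTs]
            exact hlt
        rw [ih (s ++ [a]) hlen' hs' H', Finset.mul_sum]
        refine Finset.sum_congr rfl fun w _ => ?_
        rw [hpp (List.ofFn w), mul_assoc]
        congr 2
        simp

/-- Exact improvement identity: `J(a(π)) − J(π) =
E[(r⊥ − V(x,y_{1:τ-1};π))·𝟙{τ ≤ c}]` — the improvement of dynamic
abstention over the base policy equals the expected gap between the
fallback reward and the value at abstention time, on the event of
abstention. -/
theorem improvement_identity [Fintype V] {X : Type*} [Fintype X]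
    (e : V) (ρ : X → ℝ) (r : X → List V → ℝ)
    (π : X → List V → V → ℝ) (rb : ℝ) (T : ℕ)
    (hρ0 : ∀ x, 0 ≤ ρ x) (hρ1 : ∑ x, ρ x = 1)
    (hπ0 : ∀ x s a, 0 ≤ π x s a) (hπ1 : ∀ x s, ∑ a : V, π x s a = 1)
    (hbin : ∀ x y, r x y = 0 ∨ r x y = 1)
    (hrb0 : 0 < rb) (hrb1 : rb ≤ 1) (hT : 1 ≤ T) :
    (∑ x, ρ x * Aval e (r x) (π x) rb T []) - (∑ x, ρ x * Vval e (r x) (π x) T [])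
      = ∑ x, ρ x * ∑ w : Fin T → V,
          prefProbAux (π x) [] (List.ofFn w) *
            ((rb - Vval e (r x) (π x)
                (T - (TauOf e (r x) (π x) rb T (List.ofFn w) - 1))
                ((List.ofFn w).take (TauOf e (r x) (π x) rb T (List.ofFn w) - 1))) *
             (if TauOf e (r x) (π x) rb T (List.ofFn w) ≤ CtOf e T (List.ofFn w)
              then (1:ℝ) else 0)) := by
  rw [← Finset.sum_sub_distrib]
  refine Finset.sum_congr rfl fun x _ => ?_
  rw [← mul_sub]
  congr 1
  rw [aval_sub_vval,
    main_ind e (r x) (π x) rb T (hπ1 x) hrb0 T [] (by simp) (by simp)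
      (by intro m hm; simp at hm)]
  refine Finset.sum_congr rfl fun w _ => ?_
  simp only [Phi, List.nil_append]
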